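/- Let M ⊆ ℝ^N be a compact set and f : ℝ^N → ℝ^{k+1} a linear map. If the value function V_f(c) = sup { f_0(x) : f_1(x) = c_1, …, f_k(x) = c_k, x ∈ M } is concave, then for all c ∈ ℝ^k, V_f(c) = sup { f_0(x) : f_1(x) = c_1, …, f_k(x) = c_k, x ∈ conv(M) }. -/

import Mathlib

open scoped BigOperators

theorem stmt_7 {N k : ℕ} (M : Set (Fin N → ℝ)) (hM : IsCompact M)
    (f : (Fin N → ℝ) →ₗ[ℝ] (Fin (k + 1) → ℝ))
    (V : (Fin k → ℝ) → EReal)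
    (hV : ∀ c, V c = sSup {y : EReal |
      ∃ x ∈ M, (∀ i : Fin k, f x i.succ = c i) ∧ y = ((f x 0 : ℝ) : EReal)})
    (hconc : ∀ (c c' : Fin k → ℝ) (lam : ℝ), 0 ≤ lam → lam ≤ 1 →
      V c ≠ ⊥ → V c' ≠ ⊥ → V c ≠ ⊤ → V c' ≠ ⊤ →
      (lam : EReal) * V c + ((1 - lam : ℝ) : EReal) * V c' ≤
        V (fun i => lam * c i + (1 - lam) * c' i)) :
    ∀ c : Fin k → ℝ, V c = sSup {y : EReal |
      ∃ x ∈ convexHull ℝ M, (∀ i : Fin k, f x i.succ = c i) ∧ y = ((f x 0 : ℝ) : EReal)} := by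
  -- A uniform upper bound on f · 0 over M
  have hcont : Continuous fun x : Fin N → ℝ => f x 0 :=
    (continuous_apply (0 : Fin (k+1))).comp f.continuous_of_finiteDimensional
  obtain ⟨B, hB⟩ := ((hM.image hcont).bddAbove)
  have hBmem : ∀ x ∈ M, f x 0 ≤ B := fun x hx => hB ⟨x, hx, rfl⟩
  have hVtop : ∀ c, V c ≤ (B : EReal) := by
    intro c
    rw [hV c]
    refine sSup_le ?_
    rintro y ⟨x, hx, -, rfl⟩
    exact_mod_cast hBmem x hx
  have hVnetop : ∀ c, V c ≠ ⊤ := fun c h => by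
    simpa [h] using hVtop c
  -- the domain and the real-valued function
  set D : Set (Fin k → ℝ) := {c | V c ≠ ⊥} with hD
  set g : (Fin k → ℝ) → ℝ := fun c => (V c).toReal with hg
  have hgV : ∀ c ∈ D, ((g c : ℝ) : EReal) = V c := fun c hc =>
    EReal.coe_toReal (hVnetop c) hc
  have hconcg : ConcaveOn ℝ D g := by
    constructor
    · intro c hc c' hc' a b ha hb hab
      have hle := hconc c c' a ha (by linarith) hc hc' (hVnetop c) (hVnetop c')
      have hb' : b = 1 - a := by linarith
      have hne : V (fun i => a * c i + (1 - a) * c' i) ≠ ⊥ := by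
        intro h
        rw [h] at hle
        rw [← hgV c hc, ← hgV c' hc'] at hle
        simp only [← EReal.coe_mul, ← EReal.coe_add, le_bot_iff, EReal.coe_ne_bot] at hle
      have : a • c + b • c' = fun i => a * c i + (1 - a) * c' i := by
        funext i; simp [hb']
      rw [hD]; simpa [this] using hne
    · intro c hc c' hc' a b ha hb hab
      have hle := hconc c c' a ha (by linarith) hc hc' (hVnetop c) (hVnetop c')
      have hb' : b = 1 - a := by linarith
      rw [← hgV c hc, ← hgV c' hc'] at hle
      rw [show ((a:EReal) * (g c : EReal) + ((1-a:ℝ):EReal) * (g c' : EReal))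
          = (((a * g c + (1-a) * g c' : ℝ)) : EReal) by
        rw [← EReal.coe_mul, ← EReal.coe_mul, ← EReal.coe_add]] at hle
      have hmem : V (fun i => a * c i + (1 - a) * c' i) ≠ ⊥ := by
        intro h; rw [h, le_bot_iff] at hle; exact EReal.coe_ne_bot _ hle
      have heq : a • c + b • c' = fun i => a * c i + (1 - a) * c' i := by
        funext i; simp [hb']
      rw [← hgV _ (by rw [hD]; simpa [heq] using hmem)] at hle
      rw [EReal.coe_le_coe_iff] at hle
      rw [heq]; simpa [hb', smul_eq_mul] using hle
  intro c
  rw [hV c]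
  apply le_antisymm
  · apply sSup_le_sSup
    rintro y ⟨x, hx, hxc, rfl⟩
    exact ⟨x, subset_convexHull ℝ M hx, hxc, rfl⟩
  · refine sSup_le ?_
    rintro y ⟨x, hx, hxc, rfl⟩
    rw [mem_convexHull_iff_exists_fintype] at hx
    obtain ⟨ι, _, w, z, hw0, hw1, hz, hzx⟩ := hx
    -- constraints of each point
    set d : ι → Fin k → ℝ := fun j i => f (z j) i.succ with hdd
    have hfx : ∀ i : Fin (k+1), f x i = ∑ j, w j * f (z j) i := by
      intro i
      rw [← hzx]
      simp [map_sum, map_smul, Finset.sum_apply]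
    have hdmem : ∀ j, d j ∈ D := by
      intro j
      rw [hD]
      intro h
      have : ((f (z j) 0 : ℝ) : EReal) ≤ V (d j) := by
        rw [hV]
        exact le_sSup ⟨z j, hz j, fun i => rfl, rfl⟩
      rw [h, le_bot_iff] at this
      exact EReal.coe_ne_bot _ this
    have hdle : ∀ j, f (z j) 0 ≤ g (d j) := by
      intro j
      have h1 : ((f (z j) 0 : ℝ) : EReal) ≤ V (d j) := by
        rw [hV]
        exact le_sSup ⟨z j, hz j, fun i => rfl, rfl⟩
      rw [← hgV _ (hdmem j)] at h1
      exact_mod_cast h1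
    have hsum : (∑ j, w j • d j) = c := by
      funext i
      rw [← hxc i, hfx i.succ]
      simp [hdd, Finset.sum_apply]
    have hjensen := hconcg.le_map_sum (t := Finset.univ) (fun j _ => hw0 j)
      hw1 (fun j _ => hdmem j)
    rw [hsum] at hjensen
    have hcD : c ∈ D := by
      rw [← hsum]
      exact hconcg.1.sum_mem (fun j _ => hw0 j) hw1 (fun j _ => hdmem j)
    have step1 : f x 0 ≤ ∑ j, w j • g (d j) := by
      rw [hfx 0]
      apply Finset.sum_le_sum
      intro j _
      exact mul_le_mul_of_nonneg_left (hdle j) (hw0 j)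
    have : f x 0 ≤ g c := le_trans step1 hjensen
    rw [← hV c, ← hgV c hcD]
    exact_mod_cast this
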